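/- Pauli eigenvalues of a Pauli-Lindblad channel: let λ : V → ℝ, let L be the linear map on 2^n×2^n complex matrices L(ρ) = Σ_{a ∈ V} λ_a·(P_a ρ P_a − ρ), and let exp(L) denote the exponential of L as a linear endomorphism. Then for every b ∈ V, exp(L)(P_b) = exp(−2 Σ_{k ∈ V} λ_k·⟨b,k⟩_ℤ)·P_b; equivalently the Pauli eigenvalue f_b = 2^{-n}·trace(P_b · exp(L)(P_b)) equals exp(−2 Σ_{k ∈ V} λ_k·⟨b,k⟩_ℤ). -/

import Mathlib

/-- Index set of `n`-qubit Pauli words. -/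
abbrev V (n : ℕ) : Type := (Fin n → ZMod 2) × (Fin n → ZMod 2)

/-- Symplectic inner product `⟨a,b⟩ = Σᵢ (aₓᵢ·b_zᵢ + a_zᵢ·bₓᵢ) ∈ ZMod 2`. -/
def sform {n : ℕ} (a b : V n) : ZMod 2 := ∑ i, (a.1 i * b.2 i + a.2 i * b.1 i)

/-- The sign `χ(a,b) = (−1)^⟨a,b⟩ ∈ ℝ`. -/
noncomputable def chi {n : ℕ} (a b : V n) : ℝ := (-1 : ℝ) ^ (sform a b).val

/-- Integer (real-valued) lift `⟨a,b⟩_ℤ ∈ {0,1} ⊂ ℝ`. -/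
noncomputable def sformZ {n : ℕ} (a b : V n) : ℝ := ((sform a b).val : ℝ)

/-- The single-qubit Pauli factor `i^(aₓ·a_z) · X^(aₓ) · Z^(a_z)`. -/
noncomputable def pauli1 (ax az : ZMod 2) : Matrix (Fin 2) (Fin 2) ℂ :=
  (Complex.I ^ (ax.val * az.val)) •
    ((!![0, 1; 1, 0] : Matrix (Fin 2) (Fin 2) ℂ) ^ ax.val *
     (!![1, 0; 0, -1] : Matrix (Fin 2) (Fin 2) ℂ) ^ az.val)

/-- The space of `2^n × 2^n` complex matrices (indexed by `Fin n → Fin 2`). -/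
abbrev Mq (n : ℕ) : Type := Matrix (Fin n → Fin 2) (Fin n → Fin 2) ℂ

/-- The `n`-qubit Pauli word `P_a`, the Kronecker product over `i ∈ Fin n`
of `i^(aₓᵢ·a_zᵢ)·X^(aₓᵢ)·Z^(a_zᵢ)`. -/
noncomputable def P {n : ℕ} (a : V n) : Mq n :=
  Matrix.of fun x y => ∏ i, pauli1 (a.1 i) (a.2 i) (x i) (y i)

attribute [local instance] Matrix.linftyOpNormedAddCommGroup Matrix.linftyOpNormedRing
  Matrix.linftyOpNormedAlgebra

/-- Port helper: `Mq n →L[ℂ] Mq n` is a topological ring (via the operator-norm normed ring);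
instance search no longer finds this by itself. -/
instance Mq.clm_isTopologicalRing (n : ℕ) : IsTopologicalRing (Mq n →L[ℂ] Mq n) :=
  @NonUnitalSeminormedRing.toIsTopologicalRing _
    (ContinuousLinearMap.toNormedRing (E := Mq n) (𝕜 := ℂ)).toSeminormedRing.toNonUnitalSeminormedRing

/- ### Auxiliary lemmas -/

lemma zmod2_cases (a : ZMod 2) : a = 0 ∨ a = 1 := by revert a; decide

lemma val_two : ((2 : ZMod 2)).val = 0 := rfl
lemma val_one_add_one : ((1+1 : ZMod 2)).val = 0 := rfl

lemma pauli1_mul_self (a c : ZMod 2) : pauli1 a c * pauli1 a c = 1 := by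
  rcases zmod2_cases a with rfl | rfl <;> rcases zmod2_cases c with rfl | rfl <;>
    ext i j <;> fin_cases i <;> fin_cases j <;>
    simp [pauli1, Matrix.mul_apply, Fin.sum_univ_two, Matrix.one_apply, ZMod.val_zero,
      ZMod.val_one, val_two, val_one_add_one, Complex.I_mul_I]

lemma pauli1_comm (a c b d : ZMod 2) :
    pauli1 a c * pauli1 b d
      = ((-1:ℂ) ^ ((a*d + c*b : ZMod 2)).val) • (pauli1 b d * pauli1 a c) := by
  rcases zmod2_cases a with rfl | rfl <;> rcases zmod2_cases c with rfl | rfl <;>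
    rcases zmod2_cases b with rfl | rfl <;> rcases zmod2_cases d with rfl | rfl <;>
    ext i j <;> fin_cases i <;> fin_cases j <;>
    simp [pauli1, Matrix.mul_apply, Fin.sum_univ_two, ZMod.val_zero,
      ZMod.val_one, val_two, val_one_add_one, Complex.I_mul_I]

lemma neg_one_pow_val_add (s t : ZMod 2) :
    ((-1:ℂ)) ^ ((s + t).val) = (-1:ℂ) ^ s.val * (-1:ℂ) ^ t.val := by
  rcases zmod2_cases s with rfl | rfl <;> rcases zmod2_cases t with rfl | rfl <;>
    simp [ZMod.val_zero, ZMod.val_one, val_one_add_one]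

lemma neg_one_pow_val_sum {ι : Type*} (s : Finset ι) (f : ι → ZMod 2) :
    ((-1:ℂ)) ^ ((∑ i ∈ s, f i).val) = ∏ i ∈ s, (-1:ℂ) ^ ((f i).val) := by
  induction s using Finset.cons_induction with
  | empty => simp
  | cons a s ha ih => rw [Finset.sum_cons, Finset.prod_cons, neg_one_pow_val_add, ih]

lemma P_mul_eq {n : ℕ} (a b : V n) :
    P a * P b = Matrix.of fun x y =>
      ∏ i, (pauli1 (a.1 i) (a.2 i) * pauli1 (b.1 i) (b.2 i)) (x i) (y i) := by
  ext x y
  simp only [P, Matrix.mul_apply, Matrix.of_apply, ← Finset.prod_mul_distrib]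
  rw [← Fintype.piFinset_univ]
  exact Finset.sum_prod_piFinset Finset.univ
    (fun i j => pauli1 (a.1 i) (a.2 i) (x i) j * pauli1 (b.1 i) (b.2 i) j (y i))

lemma P_mul_self {n : ℕ} (a : V n) : P a * P a = 1 := by
  rw [P_mul_eq]
  ext x y
  simp only [Matrix.of_apply, pauli1_mul_self, Matrix.one_apply]
  by_cases hxy : x = y
  · simp [hxy]
  · obtain ⟨i, hi⟩ := Function.ne_iff.mp hxy
    rw [if_neg hxy]
    exact Finset.prod_eq_zero (Finset.mem_univ i) (by simp [if_neg hi])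

lemma sform_symm {n : ℕ} (a b : V n) : sform a b = sform b a := by
  unfold sform
  exact Finset.sum_congr rfl fun i _ => by ring

lemma P_comm {n : ℕ} (a b : V n) :
    P a * P b = ((-1:ℂ) ^ (sform a b).val) • (P b * P a) := by
  rw [P_mul_eq, P_mul_eq]
  ext x y
  simp only [Matrix.of_apply, Matrix.smul_apply, smul_eq_mul]
  have : ∀ i : Fin n,
      (pauli1 (a.1 i) (a.2 i) * pauli1 (b.1 i) (b.2 i)) (x i) (y i)
        = (-1:ℂ) ^ ((a.1 i * b.2 i + a.2 i * b.1 i : ZMod 2)).val *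
          (pauli1 (b.1 i) (b.2 i) * pauli1 (a.1 i) (a.2 i)) (x i) (y i) := by
    intro i
    rw [pauli1_comm (a.1 i) (a.2 i) (b.1 i) (b.2 i)]
    simp
  rw [Finset.prod_congr rfl fun i _ => this i, Finset.prod_mul_distrib, sform,
    neg_one_pow_val_sum]

lemma P_conj {n : ℕ} (a b : V n) :
    P a * P b * P a = ((-1:ℂ) ^ (sform a b).val) • P b := by
  rw [P_comm, Matrix.smul_mul, mul_assoc, P_mul_self, mul_one]

lemma exp_eigen {E : Type*} [NormedAddCommGroup E] [NormedSpace ℂ E] [CompleteSpace E]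
    (L : E →L[ℂ] E) (x : E) (μ : ℂ) (h : L x = μ • x) :
    NormedSpace.exp L x = Complex.exp μ • x := by
  have hpow : ∀ k : ℕ, (L ^ k) x = μ ^ k • x := by
    intro k
    induction k with
    | zero => simp
    | succ k ih =>
        rw [pow_succ', pow_succ']
        rw [ContinuousLinearMap.mul_apply, ih, map_smul, h, smul_smul, mul_comm]
  have hs : Summable fun k : ℕ => ((Nat.factorial k : ℂ))⁻¹ • L ^ k :=
    NormedSpace.expSeries_summable' (𝕂 := ℂ) L
  have hsc : Summable fun k : ℕ => ((Nat.factorial k : ℂ))⁻¹ * μ ^ k := by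
    simpa [smul_eq_mul] using NormedSpace.expSeries_summable' (𝕂 := ℂ) μ
  rw [NormedSpace.exp_eq_tsum (𝕂 := ℂ)]
  calc (∑' k : ℕ, ((Nat.factorial k : ℂ))⁻¹ • L ^ k) x
      = ∑' k : ℕ, (((Nat.factorial k : ℂ))⁻¹ • L ^ k) x :=
        (ContinuousLinearMap.apply ℂ E x).map_tsum hs
    _ = ∑' k : ℕ, (((Nat.factorial k : ℂ))⁻¹ * μ ^ k) • x := by
        simp [hpow, smul_smul]
    _ = (∑' k : ℕ, ((Nat.factorial k : ℂ))⁻¹ * μ ^ k) • x := Summable.tsum_smul_const hsc x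
    _ = Complex.exp μ • x := by
        rw [Complex.exp_eq_exp_ℂ, NormedSpace.exp_eq_tsum (𝕂 := ℂ)]
        simp [smul_eq_mul]

theorem pauli_eigenvalues_of_PL_channel (n : ℕ) (hn : 1 ≤ n) (lam : V n → ℝ)
    (L : Mq n →L[ℂ] Mq n)
    (hL : ∀ ρ : Mq n, L ρ = ∑ a : V n, (lam a : ℂ) • (P a * ρ * P a - ρ)) (b : V n) :
    NormedSpace.exp L (P b)
        = ((Real.exp (-2 * ∑ k : V n, lam k * sformZ b k) : ℝ) : ℂ) • P b ∧
      ((2 : ℂ) ^ n)⁻¹ * Matrix.trace (P b * NormedSpace.exp L (P b))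
        = ((Real.exp (-2 * ∑ k : V n, lam k * sformZ b k) : ℝ) : ℂ) := by
  set c : ℝ := -2 * ∑ k : V n, lam k * sformZ b k with hc
  have key : ∀ a : V n, P a * P b * P a - P b
      = ((-2 : ℂ) * ((sform b a).val : ℂ)) • P b := by
    intro a
    rw [P_conj, sform_symm a b]
    rcases zmod2_cases (sform b a) with h | h <;> rw [h]
    · simp
    · simp only [ZMod.val_one, pow_one]
      module
  have hLP : L (P b) = (c : ℂ) • P b := by
    rw [hL]
    have : ∀ a : V n, (lam a : ℂ) • (P a * P b * P a - P b)
        = ((lam a : ℂ) * ((-2 : ℂ) * ((sform b a).val : ℂ))) • P b := by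
      intro a; rw [key a, smul_smul]
    rw [Finset.sum_congr rfl fun a _ => this a, ← Finset.sum_smul]
    congr 1
    rw [hc]
    push_cast [sformZ]
    rw [Finset.mul_sum]
    exact Finset.sum_congr rfl fun a _ => by ring
  have hexp : NormedSpace.exp L (P b) = ((Real.exp c : ℝ) : ℂ) • P b := by
    rw [show NormedSpace.exp L (P b) = _ from exp_eigen L (P b) (c : ℂ) hLP, ← Complex.ofReal_exp]
  refine ⟨hexp, ?_⟩
  rw [hexp, Matrix.mul_smul, Matrix.trace_smul, P_mul_self, Matrix.trace_one]
  have hcard : (Fintype.card (Fin n → Fin 2) : ℂ) = (2 : ℂ) ^ n := by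
    simp [Fintype.card_fun]
  rw [smul_eq_mul, hcard]
  have h2 : ((2 : ℂ) ^ n) ≠ 0 := pow_ne_zero _ two_ne_zero
  field_simp
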